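/- Synchronous team semantics for LTL is downward closed: if a team T satisfies an LTL formula φ under synchronous team semantics, then every subteam T' ⊆ T also satisfies φ. -/

import Mathlib

/-- A trace assigns to each time point a set of atomic propositions. -/
abbrev Trace (AP : Type) := ℕ → Set AP
/-- A team is a set of traces. -/
abbrev Team (AP : Type) := Set (Trace AP)

/-- The suffix `t[i,∞)` of a trace. -/
def Trace.shift {AP : Type} (t : Trace AP) (i : ℕ) : Trace AP := fun j => t (i + j)

/-- The synchronous suffix `T[i,∞)` of a team. -/
def Team.shift {AP : Type} (T : Team AP) (i : ℕ) : Team AP := (fun t => t.shift i) '' T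

/-- Asynchronous shift: each trace `t` is shifted by its own amount `f t`. -/
def Team.ashift {AP : Type} (T : Team AP) (f : Trace AP → ℕ) : Team AP :=
  (fun t => t.shift (f t)) '' T

/-- LTL formulas in negation normal form. -/
inductive LTL (AP : Type) : Type where
  | atom : AP → LTL AP
  | natom : AP → LTL AP
  | conj : LTL AP → LTL AP → LTL AP
  | disj : LTL AP → LTL AP → LTL AP
  | next : LTL AP → LTL AP
  | fut : LTL AP → LTL AP
  | glob : LTL AP → LTL AP
  | untl : LTL AP → LTL AP → LTL AP
  | rel : LTL AP → LTL AP → LTL AP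

/-- Classical LTL semantics on a single trace. -/
def ltlSat {AP : Type} : LTL AP → Trace AP → Prop
  | .atom p, t => p ∈ t 0
  | .natom p, t => p ∉ t 0
  | .conj φ ψ, t => ltlSat φ t ∧ ltlSat ψ t
  | .disj φ ψ, t => ltlSat φ t ∨ ltlSat ψ t
  | .next φ, t => ltlSat φ (t.shift 1)
  | .fut φ, t => ∃ k, ltlSat φ (t.shift k)
  | .glob φ, t => ∀ k, ltlSat φ (t.shift k)
  | .untl φ ψ, t => ∃ k, ltlSat ψ (t.shift k) ∧ ∀ k' < k, ltlSat φ (t.shift k')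
  | .rel φ ψ, t => ∀ k, ltlSat ψ (t.shift k) ∨ ∃ k' < k, ltlSat φ (t.shift k')

/-- Synchronous team semantics for LTL. -/
def syncSat {AP : Type} : LTL AP → Team AP → Prop
  | .atom p, T => ∀ t ∈ T, p ∈ t 0
  | .natom p, T => ∀ t ∈ T, p ∉ t 0
  | .conj φ ψ, T => syncSat φ T ∧ syncSat ψ T
  | .disj φ ψ, T => ∃ T₁ T₂, T₁ ∪ T₂ = T ∧ syncSat φ T₁ ∧ syncSat ψ T₂
  | .next φ, T => syncSat φ (T.shift 1)
  | .fut φ, T => ∃ k, syncSat φ (T.shift k)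
  | .glob φ, T => ∀ k, syncSat φ (T.shift k)
  | .untl φ ψ, T => ∃ k, syncSat ψ (T.shift k) ∧ ∀ k' < k, syncSat φ (T.shift k')
  | .rel φ ψ, T => ∀ k, syncSat ψ (T.shift k) ∨ ∃ k' < k, syncSat φ (T.shift k')

/-- Asynchronous team semantics for LTL: temporal operators use an
independent time shift `f t` for each trace `t` of the team. -/
def asyncSat {AP : Type} : LTL AP → Team AP → Prop
  | .atom p, T => ∀ t ∈ T, p ∈ t 0
  | .natom p, T => ∀ t ∈ T, p ∉ t 0
  | .conj φ ψ, T => asyncSat φ T ∧ asyncSat ψ T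
  | .disj φ ψ, T => ∃ T₁ T₂, T₁ ∪ T₂ = T ∧ asyncSat φ T₁ ∧ asyncSat ψ T₂
  | .next φ, T => asyncSat φ (T.shift 1)
  | .fut φ, T => ∃ f : Trace AP → ℕ, asyncSat φ (T.ashift f)
  | .glob φ, T => ∀ f : Trace AP → ℕ, asyncSat φ (T.ashift f)
  | .untl φ ψ, T => ∃ f : Trace AP → ℕ, asyncSat ψ (T.ashift f) ∧
      ∀ g : Trace AP → ℕ, (∀ t ∈ T, g t < f t) → asyncSat φ (T.ashift g)
  | .rel φ ψ, T => ∀ f : Trace AP → ℕ, asyncSat ψ (T.ashift f) ∨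
      ∃ g : Trace AP → ℕ, (∀ t ∈ T, g t < f t) ∧ asyncSat φ (T.ashift g)

lemma Team.shift_mono {AP : Type} {T T' : Team AP} (h : T' ⊆ T) (i : ℕ) :
    T'.shift i ⊆ T.shift i := Set.image_mono h

/-- synchronous team semantics is downward closed. -/
theorem sync_downward_closed {AP : Type} (φ : LTL AP) (T T' : Team AP)
    (h : syncSat φ T) (hsub : T' ⊆ T) : syncSat φ T' := by
  induction φ generalizing T T' with
  | atom p => exact fun t ht => h t (hsub ht)
  | natom p => exact fun t ht => h t (hsub ht)
  | conj φ ψ ihφ ihψ => exact ⟨ihφ _ _ h.1 hsub, ihψ _ _ h.2 hsub⟩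
  | disj φ ψ ihφ ihψ =>
    obtain ⟨T₁, T₂, hun, h1, h2⟩ := h
    refine ⟨T₁ ∩ T', T₂ ∩ T', ?_, ihφ _ _ h1 Set.inter_subset_left,
      ihψ _ _ h2 Set.inter_subset_left⟩
    rw [← Set.union_inter_distrib_right, hun]
    exact Set.inter_eq_right.mpr hsub
  | next φ ih => exact ih _ _ h (Team.shift_mono hsub 1)
  | fut φ ih => obtain ⟨k, hk⟩ := h; exact ⟨k, ih _ _ hk (Team.shift_mono hsub k)⟩
  | glob φ ih => exact fun k => ih _ _ (h k) (Team.shift_mono hsub k)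
  | untl φ ψ ihφ ihψ =>
    obtain ⟨k, hk, hall⟩ := h
    exact ⟨k, ihψ _ _ hk (Team.shift_mono hsub k),
      fun k' hk' => ihφ _ _ (hall k' hk') (Team.shift_mono hsub k')⟩
  | rel φ ψ ihφ ihψ =>
    intro k
    rcases h k with hk | ⟨k', hk', hφ⟩
    · exact Or.inl (ihψ _ _ hk (Team.shift_mono hsub k))
    · exact Or.inr ⟨k', hk', ihφ _ _ hφ (Team.shift_mono hsub k')⟩
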